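/- arXiv:1407.6169 — 6 statements merged into one kernel-verified Lean document; each statement's English description precedes it below -/
import Mathlib

section
/- Let f : 𝔽₂^n → 𝔽₂ be a Boolean function and suppose there exists an affine subspace U ⊆ 𝔽₂^n of dimension k such that f restricted to U agrees with an affine function. Then NL(f) ≤ 2^{n-1} - 2^{k-1}. -/
/-- Nonlinearity of an `(n,1)`-function: `2^n` minus the maximal agreement
with an affine function `x ↦ ⟨a,x⟩ + b`. -/
noncomputable def NL (n : ℕ) (f : (Fin n → ZMod 2) → ZMod 2) : ℕ :=
  2 ^ n - Finset.univ.sup (fun ab : (Fin n → ZMod 2) × ZMod 2 =>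
    Nat.card {x : Fin n → ZMod 2 | (∑ i, ab.1 i * x i) + ab.2 = f x})

/-- `f` agrees with an affine function on the set `U`. -/
def AffineOn (n : ℕ) (f : (Fin n → ZMod 2) → ZMod 2) (U : Set (Fin n → ZMod 2)) : Prop :=
  ∃ a : Fin n → ZMod 2, ∃ b : ZMod 2, ∀ x ∈ U, f x = (∑ i, a i * x i) + b

open Module Finset

private lemma zmod2_dot (n : ℕ) (φ : Module.Dual (ZMod 2) (Fin n → ZMod 2))
    (x : Fin n → ZMod 2) : φ x = ∑ i, φ (Pi.single i 1) * x i := by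
  have hx : x = ∑ i, x i • Pi.single i (1 : ZMod 2) := by
    funext j
    simp [Pi.single_apply, Finset.sum_apply]
  conv_lhs => rw [hx]
  rw [map_sum]
  exact Finset.sum_congr rfl fun i _ => by rw [map_smul, smul_eq_mul, mul_comm]

set_option maxHeartbeats 2000000 in
/-- If f is affine on an affine subspace of dimension k, then NL(f) ≤ 2^(n-1) - 2^(k-1). -/
theorem nl_le_of_affine_on_subspace (n k : ℕ) (f : (Fin n → ZMod 2) → ZMod 2)
    (W : Submodule (ZMod 2) (Fin n → ZMod 2)) (c : Fin n → ZMod 2)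
    (hW : Module.finrank (ZMod 2) W = k)
    (hf : AffineOn n f {x | ∃ w ∈ W, x = c + w}) :
    (NL n f : ℝ) ≤ 2 ^ ((n : ℝ) - 1) - 2 ^ ((k : ℝ) - 1) := by
  classical
  have hzz : ∀ z : ZMod 2, z + z = 0 := by decide
  have hplus : ∀ z : ZMod 2, z + 1 + 1 = z := by decide
  have hne2 : ∀ z w : ZMod 2, (¬ z = w) ↔ z = w + 1 := by decide
  have hvv : ∀ v : Fin n → ZMod 2, v + v = 0 := fun v => funext fun i => hzz (v i)
  have hEn : Module.finrank (ZMod 2) (Fin n → ZMod 2) = n := Module.finrank_fin_fun (ZMod 2)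
  have hkn : k ≤ n := by
    have h := Submodule.finrank_le W
    rw [hEn, hW] at h
    exact h
  obtain ⟨a₀, b₀, hab⟩ := hf
  have hcard : ∀ p : (Fin n → ZMod 2) → Prop,
      Nat.card {x | p x} = (Finset.univ.filter p).card := fun p => by
    rw [Nat.card_eq_fintype_card]; exact Fintype.card_subtype p
  have hEcard : Fintype.card (Fin n → ZMod 2) = 2 ^ n := by simp
  -- Key claim: some affine function agrees with f on at least 2^(n-1)+2^(k-1) points.
  have key : ∃ ab : (Fin n → ZMod 2) × ZMod 2,
      ((2 : ℝ) ^ n + 2 ^ k) ≤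
        2 * (Nat.card {x : Fin n → ZMod 2 | (∑ i, ab.1 i * x i) + ab.2 = f x} : ℝ) := by
    rcases eq_or_lt_of_le hkn with heq | hlt
    · -- k = n : f is affine everywhere
      refine ⟨(a₀, b₀), ?_⟩
      show ((2 : ℝ) ^ n + 2 ^ k) ≤
        2 * (Nat.card {x : Fin n → ZMod 2 | (∑ i, a₀ i * x i) + b₀ = f x} : ℝ)
      have hWtop : W = ⊤ := Submodule.eq_top_of_finrank_eq (by rw [hW, hEn, heq])
      have hfil : (Finset.univ.filter
          (fun x : Fin n → ZMod 2 => (∑ i, a₀ i * x i) + b₀ = f x)) = Finset.univ := by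
        apply Finset.filter_true_of_mem
        intro x _
        have hxU : x ∈ {x : Fin n → ZMod 2 | ∃ w ∈ W, x = c + w} :=
          ⟨c + x, hWtop ▸ Submodule.mem_top, by rw [← add_assoc, hvv c, zero_add]⟩
        exact (hab x hxU).symm
      have hNat : Nat.card {x : Fin n → ZMod 2 | (∑ i, a₀ i * x i) + b₀ = f x}
          = (Finset.univ.filter
            (fun x : Fin n → ZMod 2 => (∑ i, a₀ i * x i) + b₀ = f x)).card := by
        rw [Nat.card_eq_fintype_card]; exact Fintype.card_subtype _
      rw [hNat, hfil, Finset.card_univ, hEcard]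
      have hpw : (2:ℝ) ^ k ≤ 2 ^ n := pow_le_pow_right₀ (by norm_num) hkn
      push_cast
      linarith
    · -- k < n : the averaging argument
      obtain ⟨m, hm⟩ : ∃ m, n = k + (m + 1) := ⟨n - k - 1, by omega⟩
      have hFinD : Finite (Module.Dual (ZMod 2) (Fin n → ZMod 2)) :=
        Finite.of_injective _ DFunLike.coe_injective
      have hFt : Fintype W.dualAnnihilator := Fintype.ofFinite _
      have hfinS : finrank (ZMod 2) W.dualAnnihilator = m + 1 := by
        have h1 := LinearEquiv.finrank_eq (R := ZMod 2) (M := (Fin n → ZMod 2) ⧸ W)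
          (N := {x // x ∈ W.dualAnnihilator}) (Subspace.quotEquivAnnihilator W)
        have h2 := Submodule.finrank_quotient_add_finrank W
        rw [hEn, hW] at h2
        omega
      have hcardS : Fintype.card W.dualAnnihilator = 2 ^ (m + 1) := by
        rw [card_eq_pow_finrank (K := ZMod 2), ZMod.card, hfinS]
      -- per-φ agreement count
      set N : W.dualAnnihilator → ℕ := fun φ =>
        (Finset.univ.filter (fun x : Fin n → ZMod 2 =>
          (φ : Module.Dual (ZMod 2) (Fin n → ZMod 2)) (x + c)
            = (∑ i, a₀ i * x i) + b₀ + f x)).card with hN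
      -- double counting
      have hT : ∑ φ : W.dualAnnihilator, N φ = ∑ x : Fin n → ZMod 2,
          (Finset.univ.filter (fun φ : W.dualAnnihilator =>
            (φ : Module.Dual (ZMod 2) (Fin n → ZMod 2)) (x + c)
              = (∑ i, a₀ i * x i) + b₀ + f x)).card := by
        simp only [hN, Finset.card_filter]
        exact Finset.sum_comm
      -- inner count when x + c ∈ W
      have hinner1 : ∀ x : Fin n → ZMod 2, x + c ∈ W →
          (Finset.univ.filter (fun φ : W.dualAnnihilator =>
            (φ : Module.Dual (ZMod 2) (Fin n → ZMod 2)) (x + c)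
              = (∑ i, a₀ i * x i) + b₀ + f x)).card = 2 ^ (m + 1) := by
        intro x hx
        have hxU : x ∈ {x : Fin n → ZMod 2 | ∃ w ∈ W, x = c + w} :=
          ⟨x + c, hx, by rw [add_comm x c, ← add_assoc, hvv c, zero_add]⟩
        have hgx : (∑ i, a₀ i * x i) + b₀ + f x = 0 := by
          rw [← hab x hxU]; exact hzz _
        have hfil : (Finset.univ.filter (fun φ : W.dualAnnihilator =>
            (φ : Module.Dual (ZMod 2) (Fin n → ZMod 2)) (x + c)
              = (∑ i, a₀ i * x i) + b₀ + f x)) = Finset.univ := by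
          apply Finset.filter_true_of_mem
          intro φ _
          rw [hgx]
          exact (Submodule.mem_dualAnnihilator _).1 φ.2 _ hx
        rw [hfil, Finset.card_univ, hcardS]
      -- inner count when x + c ∉ W
      have hinner2 : ∀ x : Fin n → ZMod 2, x + c ∉ W →
          (Finset.univ.filter (fun φ : W.dualAnnihilator =>
            (φ : Module.Dual (ZMod 2) (Fin n → ZMod 2)) (x + c)
              = (∑ i, a₀ i * x i) + b₀ + f x)).card = 2 ^ m := by
        intro x hx
        obtain ⟨ψ, hψ1, hψ2⟩ := W.exists_dual_map_eq_bot_of_notMem hx inferInstance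
        have hψ0 : ψ ∈ W.dualAnnihilator := by
          rw [Submodule.mem_dualAnnihilator]
          intro w hw
          have hmem : ψ w ∈ W.map ψ := Submodule.mem_map_of_mem hw
          rw [hψ2] at hmem
          exact (Submodule.mem_bot _).1 hmem
        have hψv : ψ (x + c) = 1 := by
          revert hψ1; generalize ψ (x + c) = z; revert z; decide
        set ψS : W.dualAnnihilator := ⟨ψ, hψ0⟩ with hψS
        have hψψ : ψS + ψS = 0 := by
          apply Subtype.ext
          apply LinearMap.ext
          intro v
          exact hzz (ψ v)
        have hbij : (Finset.univ.filter (fun φ : W.dualAnnihilator =>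
              (φ : Module.Dual (ZMod 2) (Fin n → ZMod 2)) (x + c)
                = (∑ i, a₀ i * x i) + b₀ + f x)).card
            = (Finset.univ.filter (fun φ : W.dualAnnihilator =>
              (φ : Module.Dual (ZMod 2) (Fin n → ZMod 2)) (x + c)
                = (∑ i, a₀ i * x i) + b₀ + f x + 1)).card := by
          refine Finset.card_bij' (fun φ _ => φ + ψS) (fun φ _ => φ + ψS)
            (fun φ hφ => ?_) (fun φ hφ => ?_) (fun φ hφ => ?_) (fun φ hφ => ?_)
          · rw [Finset.mem_filter] at hφ ⊢
            refine ⟨Finset.mem_univ _, ?_⟩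
            have hadd : ((φ + ψS : W.dualAnnihilator) :
                Module.Dual (ZMod 2) (Fin n → ZMod 2)) (x + c)
                = (φ : Module.Dual (ZMod 2) (Fin n → ZMod 2)) (x + c) + ψ (x + c) := rfl
            rw [hadd, hφ.2, hψv]
          · rw [Finset.mem_filter] at hφ ⊢
            refine ⟨Finset.mem_univ _, ?_⟩
            have hadd : ((φ + ψS : W.dualAnnihilator) :
                Module.Dual (ZMod 2) (Fin n → ZMod 2)) (x + c)
                = (φ : Module.Dual (ZMod 2) (Fin n → ZMod 2)) (x + c) + ψ (x + c) := rfl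
            rw [hadd, hφ.2, hψv]
            exact hplus _
          · show (φ + ψS) + ψS = φ
            rw [add_assoc, hψψ, add_zero]
          · show (φ + ψS) + ψS = φ
            rw [add_assoc, hψψ, add_zero]
        have hsplit : (Finset.univ.filter (fun φ : W.dualAnnihilator =>
              (φ : Module.Dual (ZMod 2) (Fin n → ZMod 2)) (x + c)
                = (∑ i, a₀ i * x i) + b₀ + f x)).card
            + (Finset.univ.filter (fun φ : W.dualAnnihilator =>
              (φ : Module.Dual (ZMod 2) (Fin n → ZMod 2)) (x + c)
                = (∑ i, a₀ i * x i) + b₀ + f x + 1)).card = 2 ^ (m + 1) := by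
          have hpartition := Finset.card_filter_add_card_filter_not
            (s := (Finset.univ : Finset W.dualAnnihilator))
            (p := fun φ : W.dualAnnihilator =>
              (φ : Module.Dual (ZMod 2) (Fin n → ZMod 2)) (x + c)
                = (∑ i, a₀ i * x i) + b₀ + f x)
          rw [Finset.card_univ, hcardS] at hpartition
          have hfe : (Finset.univ.filter (fun φ : W.dualAnnihilator =>
              ¬ (φ : Module.Dual (ZMod 2) (Fin n → ZMod 2)) (x + c)
                = (∑ i, a₀ i * x i) + b₀ + f x))
              = (Finset.univ.filter (fun φ : W.dualAnnihilator =>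
              (φ : Module.Dual (ZMod 2) (Fin n → ZMod 2)) (x + c)
                = (∑ i, a₀ i * x i) + b₀ + f x + 1)) := by
            ext φ
            simp only [Finset.mem_filter, Finset.mem_univ, true_and]
            exact hne2 _ _
          rw [hfe] at hpartition
          exact hpartition
        have hpow : (2:ℕ) ^ (m + 1) = 2 * 2 ^ m := by ring
        apply Nat.eq_of_mul_eq_mul_left (show 0 < 2 by norm_num)
        rw [two_mul]
        nth_rewrite 2 [hbij]
        rw [hsplit, ← hpow]
      -- cardinality of the coset U
      have hWFt : Fintype W := Fintype.ofFinite _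
      have hWcard : Fintype.card W = 2 ^ k := by
        rw [card_eq_pow_finrank (K := ZMod 2), ZMod.card, hW]
      have hUcard : (Finset.univ.filter (fun x : Fin n → ZMod 2 => x + c ∈ W)).card = 2 ^ k := by
        rw [← hWcard, ← Finset.card_univ (α := W)]
        refine Finset.card_bij' (fun x hx => (⟨x + c, (Finset.mem_filter.1 hx).2⟩ : W))
          (fun w _ => (w : Fin n → ZMod 2) + c)
          (fun x hx => Finset.mem_univ _) (fun w hw => ?_) (fun x hx => ?_) (fun w hw => ?_)
        · rw [Finset.mem_filter]
          refine ⟨Finset.mem_univ _, ?_⟩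
          rw [add_assoc, hvv c, add_zero]
          exact w.2
        · show (x + c) + c = x
          rw [add_assoc, hvv c, add_zero]
        · apply Subtype.ext
          show ((w : Fin n → ZMod 2) + c) + c = (w : Fin n → ZMod 2)
          rw [add_assoc, hvv c, add_zero]
      -- complement cardinality
      set C := (Finset.univ.filter (fun x : Fin n → ZMod 2 => ¬ x + c ∈ W)).card with hCdef
      have hC : 2 ^ k + C = 2 ^ n := by
        have hpartition := Finset.card_filter_add_card_filter_not
          (s := (Finset.univ : Finset (Fin n → ZMod 2)))
          (p := fun x : Fin n → ZMod 2 => x + c ∈ W)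
        rw [Finset.card_univ, hEcard, hUcard] at hpartition
        exact hpartition
      -- total sum
      have hsum : ∑ φ : W.dualAnnihilator, N φ = 2 ^ k * 2 ^ (m + 1) + C * 2 ^ m := by
        rw [hT, ← Finset.sum_filter_add_sum_filter_not Finset.univ
          (fun x : Fin n → ZMod 2 => x + c ∈ W)]
        congr 1
        · rw [Finset.sum_congr rfl (fun x hx => hinner1 x (Finset.mem_filter.1 hx).2),
            Finset.sum_const, smul_eq_mul, hUcard]
        · rw [Finset.sum_congr rfl (fun x hx => hinner2 x (Finset.mem_filter.1 hx).2),
            Finset.sum_const, smul_eq_mul]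
      -- a maximizing φ
      have hne : (Finset.univ : Finset W.dualAnnihilator).Nonempty := ⟨0, Finset.mem_univ _⟩
      obtain ⟨φm, -, hφm⟩ := Finset.exists_max_image (Finset.univ : Finset W.dualAnnihilator) N hne
      have hmax : 2 ^ k * 2 ^ (m + 1) + C * 2 ^ m ≤ 2 ^ (m + 1) * N φm := by
        rw [← hsum]
        calc ∑ φ : W.dualAnnihilator, N φ ≤ ∑ _φ : W.dualAnnihilator, N φm :=
              Finset.sum_le_sum fun φ _ => hφm φ (Finset.mem_univ φ)
          _ = 2 ^ (m + 1) * N φm := by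
              rw [Finset.sum_const, Finset.card_univ, hcardS, smul_eq_mul]
      -- the chosen affine pair
      refine ⟨(fun i => a₀ i + (φm : Module.Dual (ZMod 2) (Fin n → ZMod 2)) (Pi.single i 1),
        b₀ + (φm : Module.Dual (ZMod 2) (Fin n → ZMod 2)) c), ?_⟩
      show ((2 : ℝ) ^ n + 2 ^ k) ≤ 2 * (Nat.card {x : Fin n → ZMod 2 |
        (∑ i, (a₀ i + (φm : Module.Dual (ZMod 2) (Fin n → ZMod 2)) (Pi.single i 1)) * x i)
          + (b₀ + (φm : Module.Dual (ZMod 2) (Fin n → ZMod 2)) c) = f x} : ℝ)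
      have hiff : ∀ p u v b F : ZMod 2, ((p + u + (b + v) = F) ↔ (u + v = p + b + F)) := by decide
      have hNeq : Nat.card {x : Fin n → ZMod 2 |
          (∑ i, (a₀ i + (φm : Module.Dual (ZMod 2) (Fin n → ZMod 2)) (Pi.single i 1)) * x i)
            + (b₀ + (φm : Module.Dual (ZMod 2) (Fin n → ZMod 2)) c) = f x} = N φm := by
        have hNat2 : Nat.card {x : Fin n → ZMod 2 |
            (∑ i, (a₀ i + (φm : Module.Dual (ZMod 2) (Fin n → ZMod 2)) (Pi.single i 1)) * x i)
              + (b₀ + (φm : Module.Dual (ZMod 2) (Fin n → ZMod 2)) c) = f x}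
            = (Finset.univ.filter (fun x : Fin n → ZMod 2 =>
              (∑ i, (a₀ i + (φm : Module.Dual (ZMod 2) (Fin n → ZMod 2)) (Pi.single i 1)) * x i)
                + (b₀ + (φm : Module.Dual (ZMod 2) (Fin n → ZMod 2)) c) = f x)).card := by
          rw [Nat.card_eq_fintype_card]; exact Fintype.card_subtype _
        rw [hNat2]
        have hfe : (Finset.univ.filter (fun x : Fin n → ZMod 2 =>
            (∑ i, (a₀ i + (φm : Module.Dual (ZMod 2) (Fin n → ZMod 2)) (Pi.single i 1)) * x i)
              + (b₀ + (φm : Module.Dual (ZMod 2) (Fin n → ZMod 2)) c) = f x))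
            = (Finset.univ.filter (fun x : Fin n → ZMod 2 =>
            (φm : Module.Dual (ZMod 2) (Fin n → ZMod 2)) (x + c)
              = (∑ i, a₀ i * x i) + b₀ + f x)) := by
          ext x
          simp only [Finset.mem_filter, Finset.mem_univ, true_and]
          have hexp : (∑ i, (a₀ i
              + (φm : Module.Dual (ZMod 2) (Fin n → ZMod 2)) (Pi.single i 1)) * x i)
              = (∑ i, a₀ i * x i) + (φm : Module.Dual (ZMod 2) (Fin n → ZMod 2)) x := by
            rw [zmod2_dot n (φm : Module.Dual (ZMod 2) (Fin n → ZMod 2)) x,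
              ← Finset.sum_add_distrib]
            exact Finset.sum_congr rfl fun i _ => by ring
          rw [hexp, map_add]
          exact hiff _ _ _ _ _
        rw [hfe, hN]
      rw [hNeq]
      -- now the real arithmetic
      have h1 : ((2:ℝ) ^ k * 2 ^ (m + 1) + (C:ℝ) * 2 ^ m) ≤ 2 ^ (m + 1) * (N φm : ℝ) := by
        exact_mod_cast hmax
      have h2 : (2:ℝ) ^ k + (C:ℝ) = 2 ^ n := by exact_mod_cast hC
      have hq : (0:ℝ) < 2 ^ m := by positivity
      have hn' : (2:ℝ) ^ n = 2 ^ k * (2 ^ m * 2) := by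
        rw [hm, pow_add, pow_succ]
      have hcancel : (2:ℝ) ^ m * ((2:ℝ) ^ n + 2 ^ k) ≤ 2 ^ m * (2 * (N φm : ℝ)) := by
        have hCval : (C:ℝ) = 2 ^ k * (2 ^ m * 2) - 2 ^ k := by rw [← hn']; linarith
        calc (2:ℝ) ^ m * ((2:ℝ) ^ n + 2 ^ k)
            = (2:ℝ) ^ k * 2 ^ (m+1) + (2 ^ k * (2 ^ m * 2) - 2 ^ k) * 2 ^ m := by
              rw [hn', pow_succ]; ring
          _ = (2:ℝ) ^ k * 2 ^ (m+1) + (C:ℝ) * 2 ^ m := by rw [hCval]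
          _ ≤ 2 ^ (m + 1) * (N φm : ℝ) := h1
          _ = 2 ^ m * (2 * (N φm : ℝ)) := by rw [pow_succ]; ring
      exact le_of_mul_le_mul_left hcancel hq
  -- conclude
  obtain ⟨ab, hab2⟩ := key
  have hsup : Nat.card {x : Fin n → ZMod 2 | (∑ i, ab.1 i * x i) + ab.2 = f x} ≤
      Finset.univ.sup (fun ab : (Fin n → ZMod 2) × ZMod 2 =>
        Nat.card {x : Fin n → ZMod 2 | (∑ i, ab.1 i * x i) + ab.2 = f x}) :=
    Finset.le_sup (f := fun ab : (Fin n → ZMod 2) × ZMod 2 =>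
      Nat.card {x : Fin n → ZMod 2 | (∑ i, ab.1 i * x i) + ab.2 = f x}) (Finset.mem_univ ab)
  have h2n : (2:ℝ) ^ ((n : ℝ) - 1) = 2 ^ n / 2 := by
    rw [Real.rpow_sub (by norm_num), Real.rpow_one, Real.rpow_natCast]
  have h2k : (2:ℝ) ^ ((k : ℝ) - 1) = 2 ^ k / 2 := by
    rw [Real.rpow_sub (by norm_num), Real.rpow_one, Real.rpow_natCast]
  rw [h2n, h2k]
  have hNL : NL n f = 2 ^ n - Finset.univ.sup (fun ab : (Fin n → ZMod 2) × ZMod 2 =>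
      Nat.card {x : Fin n → ZMod 2 | (∑ i, ab.1 i * x i) + ab.2 = f x}) := rfl
  rw [hNL]
  have hkld : (2:ℝ) ^ k ≤ 2 ^ n := pow_le_pow_right₀ (by norm_num) hkn
  rcases le_or_gt (Finset.univ.sup (fun ab : (Fin n → ZMod 2) × ZMod 2 =>
      Nat.card {x : Fin n → ZMod 2 | (∑ i, ab.1 i * x i) + ab.2 = f x})) (2 ^ n) with hle | hgt
  · rw [Nat.cast_sub hle]
    have hs : (Nat.card {x : Fin n → ZMod 2 | (∑ i, ab.1 i * x i) + ab.2 = f x} : ℝ) ≤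
        ((Finset.univ.sup (fun ab : (Fin n → ZMod 2) × ZMod 2 =>
          Nat.card {x : Fin n → ZMod 2 | (∑ i, ab.1 i * x i) + ab.2 = f x}) : ℕ) : ℝ) := by
      exact_mod_cast hsup
    push_cast
    linarith
  · rw [Nat.sub_eq_zero_of_le hgt.le]
    push_cast
    linarith
end

section
/- If a Boolean function f : 𝔽₂^n → 𝔽₂ has multiplicative complexity M (with respect to XOR-AND circuits), then NL(f) ≤ 2^{n-1} - 2^{n-M-1}. -/
/-- An instruction of an XOR-AND straight-line circuit: an input variable,
the constant 1, an XOR of two previous wires, or an AND of two previous wires.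
(Unbounded-fanin XOR is simulated, for free, by binary XORs.) -/
inductive Instr where
  | var : ℕ → Instr
  | one : Instr
  | xor : ℕ → ℕ → Instr
  | and : ℕ → ℕ → Instr

def Instr.isAnd : Instr → Bool
  | .and _ _ => true
  | _ => false

/-- Value of one instruction, given input `x` and previously computed wire values. -/
def stepEval (n : ℕ) (x : Fin n → ZMod 2) (vals : List (ZMod 2)) : Instr → ZMod 2
  | .var i => if h : i < n then x ⟨i, h⟩ else 0
  | .one => 1
  | .xor a b => vals.getD a 0 + vals.getD b 0
  | .and a b => vals.getD a 0 * vals.getD b 0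

/-- The list of all wire values of the circuit `P` on input `x`. -/
def evalProg (n : ℕ) (x : Fin n → ZMod 2) (P : List Instr) : List (ZMod 2) :=
  P.foldl (fun vals ins => vals ++ [stepEval n x vals ins]) []

/-- Number of AND gates in the circuit. -/
def andCount (P : List Instr) : ℕ := (P.filter Instr.isAnd).length

/-- The circuit `P` with output wires `out` computes the `(n,m)`-function `f`. -/
def Computes (n m : ℕ) (P : List Instr) (out : Fin m → ℕ)
    (f : (Fin n → ZMod 2) → Fin m → ZMod 2) : Prop :=
  ∀ x i, (evalProg n x P).getD (out i) 0 = f x i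

/-- The circuit `P` with output wire `out` computes the `(n,1)`-function `f`. -/
def Computes1 (n : ℕ) (P : List Instr) (out : ℕ)
    (f : (Fin n → ZMod 2) → ZMod 2) : Prop :=
  ∀ x, (evalProg n x P).getD out 0 = f x

/-- evaluation of affine function given by pair `p` -/
def aeval (n : ℕ) (p : (Fin n → ZMod 2) × ZMod 2) (x : Fin n → ZMod 2) : ZMod 2 :=
  (∑ i, p.1 i * x i) + p.2

lemma aeval_add (n : ℕ) (p q : (Fin n → ZMod 2) × ZMod 2) (x : Fin n → ZMod 2) :
    aeval n (p + q) x = aeval n p x + aeval n q x := by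
  simp [aeval, add_mul, Finset.sum_add_distrib]; ring

lemma aeval_zero (n : ℕ) (x : Fin n → ZMod 2) : aeval n 0 x = 0 := by simp [aeval]

lemma aeval_smul (n : ℕ) (c : ZMod 2) (p : (Fin n → ZMod 2) × ZMod 2) (x : Fin n → ZMod 2) :
    aeval n (c • p) x = c * aeval n p x := by
  simp [aeval, mul_add, Finset.mul_sum, mul_assoc]

lemma zmod2_cases (a : ZMod 2) : a = 0 ∨ a = 1 := by revert a; decide

lemma aeval_add_pts (n : ℕ) (p : (Fin n → ZMod 2) × ZMod 2) (x y z : Fin n → ZMod 2) :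
    aeval n p (x + y + z) = aeval n p x + aeval n p y + aeval n p z := by
  have h2 : ∀ a : ZMod 2, a + a = 0 := by decide
  simp [aeval, mul_add, Finset.sum_add_distrib]
  ring_nf
  rcases zmod2_cases p.2 with h | h <;> simp [h] <;> decide

/-- `A` is closed under `x+y+z`, i.e. an affine subspace when nonempty. -/
def AffClosed (n : ℕ) (A : Finset (Fin n → ZMod 2)) : Prop :=
  ∀ x ∈ A, ∀ y ∈ A, ∀ z ∈ A, x + y + z ∈ A


/-- on an affine subspace, a nonconstant affine function has zero set of exactly half size -/
lemma half_card (n : ℕ) (A : Finset (Fin n → ZMod 2)) (hA : AffClosed n A)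
    (p : (Fin n → ZMod 2) × ZMod 2) (x₀ x₁ : Fin n → ZMod 2) (h₀ : x₀ ∈ A) (h₁ : x₁ ∈ A)
    (e₀ : aeval n p x₀ = 0) (e₁ : aeval n p x₁ = 1) :
    2 * (A.filter (fun x => aeval n p x = 0)).card = A.card := by
  have key : (A.filter (fun x => aeval n p x = 0)).card
      = (A.filter (fun x => ¬ aeval n p x = 0)).card := by
    apply Finset.card_bij' (fun x _ => x + x₀ + x₁) (fun x _ => x + x₀ + x₁)
    · intro a ha
      simp only [Finset.mem_filter] at ha ⊢
      refine ⟨hA _ ha.1 _ h₀ _ h₁, ?_⟩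
      rw [aeval_add_pts, ha.2, e₀, e₁]; decide
    · intro a ha
      simp only [Finset.mem_filter] at ha ⊢
      refine ⟨hA _ ha.1 _ h₀ _ h₁, ?_⟩
      rcases zmod2_cases (aeval n p a) with h | h
      · exact absurd h ha.2
      · rw [aeval_add_pts, h, e₀, e₁]; decide
    · intro a ha
      have : a + x₀ + x₁ + x₀ + x₁ = a := by
        ext i; simp only [Pi.add_apply]; ring_nf; rw [show (2:ZMod 2) = 0 from rfl]; ring
      rw [this]
    · intro a ha
      have : a + x₀ + x₁ + x₀ + x₁ = a := by
        ext i; simp only [Pi.add_apply]; ring_nf; rw [show (2:ZMod 2) = 0 from rfl]; ring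
      rw [this]
  have := Finset.card_filter_add_card_filter_not
    (s := A) (p := fun x => aeval n p x = 0)
  omega


lemma ztwo (a : ZMod 2) : a * 2 = 0 := by revert a; decide
lemma zthree (a : ZMod 2) : a * 3 = a := by revert a; decide

lemma zmod2_ne (a : ZMod 2) (h : a ≠ 0) : a = 1 := by
  rcases zmod2_cases a with h' | h' <;> tauto

/-- a point outside an affine subspace is separated by an affine functional -/
lemma exists_separating (n : ℕ) (A : Finset (Fin n → ZMod 2)) (hA : AffClosed n A)
    (a₀ : Fin n → ZMod 2) (ha₀ : a₀ ∈ A) (x : Fin n → ZMod 2) (hx : x ∉ A) :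
    ∃ q : (Fin n → ZMod 2) × ZMod 2, (∀ y ∈ A, aeval n q y = 0) ∧ aeval n q x = 1 := by
  classical
  -- the direction space
  set W : Submodule (ZMod 2) (Fin n → ZMod 2) :=
    { carrier := {v | v + a₀ ∈ A}
      add_mem' := by
        intro u v hu hv
        have : u + v + a₀ = (u + a₀) + (v + a₀) + a₀ := by
          ext i; simp only [Pi.add_apply]; ring_nf; simp [ztwo, zthree]
        simp only [Set.mem_setOf_eq] at *
        rw [this]; exact hA _ hu _ hv _ ha₀
      zero_mem' := by simpa using ha₀
      smul_mem' := by
        intro c v hv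
        rcases zmod2_cases c with h | h <;> simp [h, Set.mem_setOf_eq] at *
        · simpa using ha₀
        · exact hv } with hW
  have hxW : x + a₀ ∉ W := by
    intro h
    have : x + a₀ + a₀ = x := by
      ext i; simp only [Pi.add_apply]; ring_nf; simp [ztwo, zthree]
    simp only [hW, Submodule.mem_mk, AddSubmonoid.mem_mk, AddSubsemigroup.mem_mk,
      Set.mem_setOf_eq] at h
    rw [this] at h; exact hx h
  obtain ⟨φ, hφx, hφW⟩ := W.exists_dual_map_eq_bot_of_notMem hxW inferInstance
  have hker : ∀ v ∈ W, φ v = 0 := by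
    intro v hv
    have : φ v ∈ W.map φ := Submodule.mem_map_of_mem hv
    rw [hφW] at this; exact (Submodule.mem_bot (ZMod 2)).mp this
  have hsum : ∀ y, (∑ i, φ (Pi.single i 1) * y i) = φ y := by
    intro y
    conv_rhs => rw [show y = ∑ i, y i • Pi.single i (1 : ZMod 2) by
      ext j; rw [Finset.sum_apply]; simp [Pi.single_apply]]
    rw [map_sum]
    exact Finset.sum_congr rfl (fun i _ => by rw [map_smul, smul_eq_mul, mul_comm])
  refine ⟨(fun i => φ (Pi.single i 1), φ a₀), ?_, ?_⟩
  · intro y hy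
    have hmem : y + a₀ ∈ W := by
      simp only [hW, Submodule.mem_mk, AddSubmonoid.mem_mk, AddSubsemigroup.mem_mk,
        Set.mem_setOf_eq]
      have : y + a₀ + a₀ = y := by
        ext i; simp only [Pi.add_apply]; ring_nf; simp [ztwo, zthree]
      rw [this]; exact hy
    have h0 : φ (y + a₀) = 0 := hker _ hmem
    rw [map_add] at h0
    simp only [aeval, hsum]
    exact h0
  · have h1 : φ (x + a₀) = 1 := zmod2_ne _ hφx
    rw [map_add] at h1
    simp only [aeval, hsum]
    exact h1


lemma evalProg_append (n : ℕ) (x : Fin n → ZMod 2) (P : List Instr) (ins : Instr) :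
    evalProg n x (P ++ [ins]) = evalProg n x P ++ [stepEval n x (evalProg n x P) ins] := by
  simp [evalProg, List.foldl_append]

lemma evalProg_length (n : ℕ) (x : Fin n → ZMod 2) (P : List Instr) :
    (evalProg n x P).length = P.length := by
  induction P using List.reverseRecOn with
  | nil => rfl
  | append_singleton P ins ih => rw [evalProg_append]; simp [ih]

lemma getD_append_lt (L : List (ZMod 2)) (v : ZMod 2) (j : ℕ) (h : j < L.length) :
    (L ++ [v]).getD j 0 = L.getD j 0 := by
  rw [List.getD_eq_getElem?_getD, List.getD_eq_getElem?_getD,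
    List.getElem?_append_left h]

lemma getD_append_eq (L : List (ZMod 2)) (v : ZMod 2) :
    (L ++ [v]).getD L.length 0 = v := by
  rw [List.getD_eq_getElem?_getD, List.getElem?_append_right (le_refl _)]
  simp

lemma getD_append_gt (L : List (ZMod 2)) (v : ZMod 2) (j : ℕ) (h : L.length < j) :
    (L ++ [v]).getD j 0 = 0 := by
  rw [List.getD_eq_getElem?_getD, List.getElem?_eq_none]
  · rfl
  · simp; omega


/-- wires of prefix are affine on A, new gate value is affine on A ⇒ all wires affine -/
lemma wires_step (n : ℕ) (P : List Instr) (ins : Instr) (A : Finset (Fin n → ZMod 2))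
    (hw : ∀ j, ∃ p, ∀ x ∈ A, (evalProg n x P).getD j 0 = aeval n p x)
    (pnew : (Fin n → ZMod 2) × ZMod 2)
    (hnew : ∀ x ∈ A, stepEval n x (evalProg n x P) ins = aeval n pnew x) :
    ∀ j, ∃ p, ∀ x ∈ A, (evalProg n x (P ++ [ins])).getD j 0 = aeval n p x := by
  intro j
  rcases lt_trichotomy j P.length with hj | hj | hj
  · obtain ⟨p, hp⟩ := hw j
    exact ⟨p, fun x hx => by
      rw [evalProg_append, getD_append_lt _ _ _ (by rw [evalProg_length]; exact hj)]
      exact hp x hx⟩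
  · refine ⟨pnew, fun x hx => ?_⟩
    subst hj
    rw [evalProg_append, ← evalProg_length n x P, getD_append_eq]
    exact hnew x hx
  · exact ⟨0, fun x hx => by
      rw [evalProg_append, getD_append_gt _ _ _ (by rw [evalProg_length]; exact hj),
        aeval_zero]⟩

lemma restrict (n : ℕ) (P : List Instr) :
    ∃ A : Finset (Fin n → ZMod 2), AffClosed n A ∧ A.Nonempty ∧
      2 ^ n ≤ A.card * 2 ^ andCount P ∧
      ∀ j, ∃ p, ∀ x ∈ A, (evalProg n x P).getD j 0 = aeval n p x := by
  classical
  induction P using List.reverseRecOn with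
  | nil =>
    refine ⟨Finset.univ, fun x _ y _ z _ => Finset.mem_univ _, Finset.univ_nonempty, ?_, ?_⟩
    · have : (Finset.univ : Finset (Fin n → ZMod 2)).card = 2 ^ n := by
        simp [Finset.card_univ]
      rw [this]; simp [andCount]
    · exact fun j => ⟨0, fun x _ => by simp [evalProg, aeval_zero]⟩
  | append_singleton P ins ih =>
    obtain ⟨A, hc, hne, hcard, hw⟩ := ih
    have hsame : ∀ (h : ins.isAnd = false), andCount (P ++ [ins]) = andCount P := by
      intro h; simp [andCount, List.filter_append, h]
    cases ins with
    | var i =>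
      refine ⟨A, hc, hne, by rwa [hsame rfl], ?_⟩
      by_cases h : i < n
      · apply wires_step n P _ A hw (Pi.single (⟨i, h⟩ : Fin n) 1, 0)
        intro x hx
        show (if h : i < n then x ⟨i, h⟩ else 0) = _
        rw [dif_pos h]
        simp [aeval, Pi.single_apply, Finset.sum_ite_eq]
      · apply wires_step n P _ A hw 0
        intro x hx
        show (if h : i < n then x ⟨i, h⟩ else 0) = _
        rw [aeval_zero, dif_neg h]
    | one =>
      refine ⟨A, hc, hne, by rwa [hsame rfl], ?_⟩
      apply wires_step n P _ A hw (0, 1)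
      intro x hx
      simp [stepEval, aeval]
    | xor a b =>
      obtain ⟨pa, hpa⟩ := hw a
      obtain ⟨pb, hpb⟩ := hw b
      refine ⟨A, hc, hne, by rwa [hsame rfl], ?_⟩
      apply wires_step n P _ A hw (pa + pb)
      intro x hx
      show (evalProg n x P).getD a 0 + (evalProg n x P).getD b 0 = _
      rw [hpa x hx, hpb x hx, aeval_add]
    | and a b =>
      obtain ⟨pa, hpa⟩ := hw a
      obtain ⟨pb, hpb⟩ := hw b
      have hcnt : andCount (P ++ [Instr.and a b]) = andCount P + 1 := by
        simp [andCount, List.filter_append, Instr.isAnd, List.filter_cons]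
      by_cases hconst : ∃ c, ∀ x ∈ A, aeval n pa x = c
      · obtain ⟨c, hcc⟩ := hconst
        refine ⟨A, hc, hne, ?_, ?_⟩
        · rw [hcnt, pow_succ]
          calc 2 ^ n ≤ A.card * 2 ^ andCount P := hcard
          _ ≤ A.card * 2 ^ andCount P * 2 := by omega
          _ = A.card * (2 ^ andCount P * 2) := by ring
        · apply wires_step n P _ A hw (c • pb)
          intro x hx
          show (evalProg n x P).getD a 0 * (evalProg n x P).getD b 0 = _
          rw [hpa x hx, hpb x hx, hcc x hx, aeval_smul]
      · push_neg at hconst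
        obtain ⟨x₁, hx₁A, hx₁⟩ := hconst 0
        obtain ⟨x₀, hx₀A, hx₀⟩ := hconst 1
        have e₁ : aeval n pa x₁ = 1 := zmod2_ne _ hx₁
        have e₀ : aeval n pa x₀ = 0 := by
          rcases zmod2_cases (aeval n pa x₀) with h | h
          · exact h
          · exact absurd h hx₀
        set A' := A.filter (fun x => aeval n pa x = 0) with hA'
        have hsub : A' ⊆ A := Finset.filter_subset _ _
        have hhalf : 2 * A'.card = A.card := half_card n A hc pa x₀ x₁ hx₀A hx₁A e₀ e₁
        refine ⟨A', ?_, ⟨x₀, by simp [hA', Finset.mem_filter, hx₀A, e₀]⟩, ?_, ?_⟩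
        · intro x hx y hy z hz
          simp only [hA', Finset.mem_filter] at hx hy hz ⊢
          refine ⟨hc _ hx.1 _ hy.1 _ hz.1, ?_⟩
          rw [aeval_add_pts, hx.2, hy.2, hz.2]; decide
        · rw [hcnt, pow_succ]
          calc 2 ^ n ≤ A.card * 2 ^ andCount P := hcard
          _ = A'.card * (2 ^ andCount P * 2) := by rw [← hhalf]; ring
        · apply wires_step n P _ A' (fun j => (hw j).imp fun p hp x hx => hp x (hsub hx)) 0
          intro x hx
          show (evalProg n x P).getD a 0 * (evalProg n x P).getD b 0 = _
          have hx0 : aeval n pa x = 0 := (Finset.mem_filter.mp hx).2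
          rw [hpa x (hsub hx), hx0, aeval_zero, zero_mul]


lemma pair_add_self (n : ℕ) (q : (Fin n → ZMod 2) × ZMod 2) : q + q = 0 := by
  have h2 : ∀ a : ZMod 2, a + a = 0 := by decide
  ext <;> simp [h2]

lemma card_fiber (n : ℕ) (A : Finset (Fin n → ZMod 2)) (hA : AffClosed n A)
    (a₀ : Fin n → ZMod 2) (ha₀ : a₀ ∈ A) (x : Fin n → ZMod 2) (hx : x ∉ A) (c : ZMod 2)
    (G : Finset ((Fin n → ZMod 2) × ZMod 2))
    (hG : G = Finset.univ.filter (fun q => ∀ y ∈ A, aeval n q y = 0)) :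
    2 * (G.filter (fun q => aeval n q x = c)).card = G.card := by
  obtain ⟨q₁, hq₁A, hq₁x⟩ := exists_separating n A hA a₀ ha₀ x hx
  have hflip : ∀ a c' : ZMod 2, a ≠ c' → a + 1 = c' := by decide
  have hflip' : ∀ a c' : ZMod 2, a = c' → a + 1 ≠ c' := by decide
  have key : (G.filter (fun q => aeval n q x = c)).card
      = (G.filter (fun q => ¬ aeval n q x = c)).card := by
    apply Finset.card_bij' (fun q _ => q + q₁) (fun q _ => q + q₁)
    · intro q hq
      simp only [Finset.mem_filter, hG, Finset.mem_univ, true_and] at hq ⊢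
      refine ⟨fun y hy => by rw [aeval_add, hq.1 y hy, hq₁A y hy, add_zero], ?_⟩
      rw [aeval_add, hq₁x]
      exact hflip' _ _ hq.2
    · intro q hq
      simp only [Finset.mem_filter, hG, Finset.mem_univ, true_and] at hq ⊢
      refine ⟨fun y hy => by rw [aeval_add, hq.1 y hy, hq₁A y hy, add_zero], ?_⟩
      rw [aeval_add, hq₁x]
      exact hflip _ _ hq.2
    · intro q _; rw [add_assoc, pair_add_self, add_zero]
    · intro q _; rw [add_assoc, pair_add_self, add_zero]
  have := Finset.card_filter_add_card_filter_not
    (s := G) (p := fun q => aeval n q x = c)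
  omega

lemma averaging (n : ℕ) (f : (Fin n → ZMod 2) → ZMod 2) (A : Finset (Fin n → ZMod 2))
    (hA : AffClosed n A) (a₀ : Fin n → ZMod 2) (ha₀ : a₀ ∈ A)
    (p₀ : (Fin n → ZMod 2) × ZMod 2) (hp₀ : ∀ x ∈ A, f x = aeval n p₀ x) :
    ∃ p : (Fin n → ZMod 2) × ZMod 2,
      2 ^ n + A.card ≤ 2 * (Finset.univ.filter (fun x => aeval n p x = f x)).card := by
  classical
  set G : Finset ((Fin n → ZMod 2) × ZMod 2) :=
    Finset.univ.filter (fun q => ∀ y ∈ A, aeval n q y = 0) with hG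
  have h0G : (0 : (Fin n → ZMod 2) × ZMod 2) ∈ G := by
    rw [hG, Finset.mem_filter]; simp [aeval]
  -- per-x count
  have hcount : ∀ x : Fin n → ZMod 2,
      2 * (G.filter (fun q => aeval n (p₀ + q) x = f x)).card
        = (if x ∈ A then 2 * G.card else G.card) := by
    intro x
    by_cases hx : x ∈ A
    · rw [if_pos hx, Finset.filter_true_of_mem (fun q hq => ?_)]
      simp only [hG, Finset.mem_filter, Finset.mem_univ, true_and] at hq
      rw [aeval_add, hq x hx, add_zero, ← hp₀ x hx]
    · rw [if_neg hx]
      have hz : ∀ a b c : ZMod 2, (a + b = c ↔ b = c + a) := by decide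
      have hiff : ∀ q, (aeval n (p₀ + q) x = f x) ↔ (aeval n q x = f x + aeval n p₀ x) := by
        intro q
        rw [aeval_add]
        exact hz _ _ _
      rw [Finset.filter_congr (fun q _ => by rw [hiff q])]
      exact card_fiber n A hA a₀ ha₀ x hx _ G hG
  -- double counting
  have hsum : 2 * ∑ q ∈ G, (Finset.univ.filter (fun x => aeval n (p₀ + q) x = f x)).card
      = G.card * (2 ^ n + A.card) := by
    have swap : ∑ q ∈ G, (Finset.univ.filter (fun x => aeval n (p₀ + q) x = f x)).card
        = ∑ x : Fin n → ZMod 2, (G.filter (fun q => aeval n (p₀ + q) x = f x)).card := by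
      simp only [Finset.card_filter]
      exact Finset.sum_comm
    rw [swap, Finset.mul_sum]
    rw [Finset.sum_congr rfl (fun x _ => hcount x)]
    have hsplit : ∀ x : Fin n → ZMod 2,
        (if x ∈ A then 2 * G.card else G.card) = G.card + (if x ∈ A then G.card else 0) := by
      intro x; by_cases h : x ∈ A <;> simp [h]; omega
    rw [Finset.sum_congr rfl (fun x _ => hsplit x), Finset.sum_add_distrib,
      Finset.sum_ite_mem, Finset.univ_inter, Finset.sum_const, Finset.sum_const]
    have hcardV : Fintype.card (Fin n → ZMod 2) = 2 ^ n := by simp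
    simp only [Finset.card_univ, hcardV, smul_eq_mul]
    ring
  -- extract a good q
  by_contra hcon
  push_neg at hcon
  have hlt : ∀ q ∈ G, 2 * (Finset.univ.filter (fun x => aeval n (p₀ + q) x = f x)).card
      ≤ 2 ^ n + A.card - 1 := by
    intro q _
    have := hcon (p₀ + q)
    omega
  have hAne : 1 ≤ A.card := Finset.card_pos.mpr ⟨a₀, ha₀⟩
  have hGne : 1 ≤ G.card := Finset.card_pos.mpr ⟨0, h0G⟩
  have : 2 * ∑ q ∈ G, (Finset.univ.filter (fun x => aeval n (p₀ + q) x = f x)).card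
      ≤ G.card * (2 ^ n + A.card - 1) := by
    rw [Finset.mul_sum]
    calc ∑ q ∈ G, 2 * (Finset.univ.filter (fun x => aeval n (p₀ + q) x = f x)).card
        ≤ ∑ q ∈ G, (2 ^ n + A.card - 1) := Finset.sum_le_sum hlt
      _ = G.card * (2 ^ n + A.card - 1) := by rw [Finset.sum_const, smul_eq_mul]
  rw [hsum] at this
  obtain ⟨Y, hY⟩ : ∃ Y, 2 ^ n + A.card = Y + 1 := ⟨2 ^ n + A.card - 1, by
    have h2n : 1 ≤ 2 ^ n := Nat.one_le_two_pow
    omega⟩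
  rw [hY] at this
  simp only [Nat.add_sub_cancel] at this
  nlinarith


/-- A Boolean function with multiplicative complexity M has NL(f) ≤ 2^(n-1) - 2^(n-M-1). -/
theorem nl_le_of_mult_complexity (n M : ℕ) (f : (Fin n → ZMod 2) → ZMod 2)
    (P : List Instr) (out : ℕ) (hP : Computes1 n P out f) (hM : andCount P = M) :
    (NL n f : ℝ) ≤ 2 ^ ((n : ℝ) - 1) - 2 ^ ((n : ℝ) - M - 1) := by
  classical
  obtain ⟨A, hA, ⟨a₀, ha₀⟩, hcard, hw⟩ := restrict n P
  obtain ⟨p₀, hp₀⟩ := hw out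
  have hp₀' : ∀ x ∈ A, f x = aeval n p₀ x := fun x hx => by rw [← hP x]; exact hp₀ x hx
  obtain ⟨p, hp⟩ := averaging n f A hA a₀ ha₀ p₀ hp₀'
  set s : ℕ := Finset.univ.sup (fun ab : (Fin n → ZMod 2) × ZMod 2 =>
    Nat.card {x : Fin n → ZMod 2 | (∑ i, ab.1 i * x i) + ab.2 = f x}) with hs
  have hcardset : ∀ ab : (Fin n → ZMod 2) × ZMod 2,
      Nat.card {x : Fin n → ZMod 2 | (∑ i, ab.1 i * x i) + ab.2 = f x}
        = (Finset.univ.filter (fun x => aeval n ab x = f x)).card := by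
    intro ab
    have hset : {x : Fin n → ZMod 2 | (∑ i, ab.1 i * x i) + ab.2 = f x}
        = ↑(Finset.univ.filter (fun x => aeval n ab x = f x)) := by
      ext x; rw [Finset.mem_coe, Finset.mem_filter]; simp [aeval]
    rw [hset, Nat.card_coe_set_eq, Set.ncard_coe_finset]
  have hsge : (Finset.univ.filter (fun x => aeval n p x = f x)).card ≤ s := by
    rw [hs, ← hcardset p]
    exact Finset.le_sup (f := fun ab : (Fin n → ZMod 2) × ZMod 2 =>
      Nat.card {x : Fin n → ZMod 2 | (∑ i, ab.1 i * x i) + ab.2 = f x}) (Finset.mem_univ p)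
  have hsle : s ≤ 2 ^ n := by
    rw [hs]
    apply Finset.sup_le
    intro ab _
    rw [hcardset ab]
    calc (Finset.univ.filter (fun x => aeval n ab x = f x)).card
        ≤ (Finset.univ : Finset (Fin n → ZMod 2)).card := Finset.card_le_card (Finset.filter_subset _ _)
      _ = 2 ^ n := by simp [Finset.card_univ]
  have hAle : A.card ≤ 2 ^ n := by
    calc A.card ≤ (Finset.univ : Finset (Fin n → ZMod 2)).card := Finset.card_le_univ A
      _ = 2 ^ n := by simp [Finset.card_univ]
  have hNL : NL n f = 2 ^ n - s := rfl
  -- pass to reals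
  have h1 : (2 : ℝ) ^ n + A.card ≤ 2 * s := by
    have h := hp.trans (Nat.mul_le_mul_left 2 hsge)
    exact_mod_cast h
  have h2 : (2 : ℝ) ^ n ≤ A.card * 2 ^ M := by
    rw [← hM]; exact_mod_cast hcard
  have hNLr : (NL n f : ℝ) = 2 ^ n - s := by
    rw [hNL, Nat.cast_sub hsle]
    push_cast
    ring
  rw [hNLr]
  have e1 : (2 : ℝ) ^ ((n : ℝ) - 1) = 2 ^ n / 2 := by
    rw [Real.rpow_sub (by norm_num), Real.rpow_one, Real.rpow_natCast]
  have e2 : (2 : ℝ) ^ ((n : ℝ) - M - 1) = 2 ^ n / 2 ^ M / 2 := by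
    rw [Real.rpow_sub (by norm_num), Real.rpow_sub (by norm_num), Real.rpow_one,
      Real.rpow_natCast, Real.rpow_natCast]
  rw [e1, e2]
  have hpow : (0:ℝ) < 2 ^ M := by positivity
  have hAge : (2:ℝ) ^ n / 2 ^ M ≤ A.card := by
    rw [div_le_iff₀ hpow]; exact h2
  nlinarith [h1, hAge]
end

section
/- If a Boolean function f : 𝔽₂^n → 𝔽₂ can be computed by an XOR-AND circuit with n−k AND gates, then there exists an affine subspace of 𝔽₂^n of dimension k on which f is affine. -/
open Module

namespace XorAndAux

abbrev V (n : ℕ) := Fin n → ZMod 2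

def Coset {n : ℕ} (W : Submodule (ZMod 2) (V n)) (c : V n) : Set (V n) :=
  {x | ∃ w ∈ W, x = c + w}

def AffOn {n : ℕ} (W : Submodule (ZMod 2) (V n)) (c : V n) (g : V n → ZMod 2) : Prop :=
  ∃ a : V n, ∃ b : ZMod 2, ∀ x ∈ Coset W c, g x = (∑ i, a i * x i) + b

lemma affOn_const {n : ℕ} (W : Submodule (ZMod 2) (V n)) (c : V n) (t : ZMod 2) :
    AffOn W c (fun _ => t) :=
  ⟨0, t, fun x _ => by simp⟩

lemma affOn_add {n : ℕ} {W : Submodule (ZMod 2) (V n)} {c : V n} {g₁ g₂ : V n → ZMod 2}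
    (h₁ : AffOn W c g₁) (h₂ : AffOn W c g₂) : AffOn W c (fun x => g₁ x + g₂ x) := by
  obtain ⟨a₁, b₁, ha₁⟩ := h₁
  obtain ⟨a₂, b₂, ha₂⟩ := h₂
  refine ⟨a₁ + a₂, b₁ + b₂, fun x hx => ?_⟩
  show g₁ x + g₂ x = _
  rw [ha₁ x hx, ha₂ x hx]
  simp [add_mul, Finset.sum_add_distrib]
  ring

lemma affOn_mono {n : ℕ} {W W' : Submodule (ZMod 2) (V n)} {c c' : V n} {g : V n → ZMod 2}
    (hsub : Coset W' c' ⊆ Coset W c) (h : AffOn W c g) : AffOn W' c' g := by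
  obtain ⟨a, b, ha⟩ := h
  exact ⟨a, b, fun x hx => ha x (hsub hx)⟩

def lfun {n : ℕ} (a : V n) : V n →ₗ[ZMod 2] ZMod 2 where
  toFun x := ∑ i, a i * x i
  map_add' x y := by simp [mul_add, Finset.sum_add_distrib]
  map_smul' r x := by simp [Finset.mul_sum]; ring_nf; simp [mul_comm, mul_assoc, mul_left_comm]

lemma zmod2_eq_one {t : ZMod 2} (h : t ≠ 0) : t = 1 := by revert h; revert t; decide

lemma and_step {n : ℕ} (W : Submodule (ZMod 2) (V n)) (c : V n) (g₁ g₂ : V n → ZMod 2)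
    (h₁ : AffOn W c g₁) (h₂ : AffOn W c g₂) :
    ∃ W' : Submodule (ZMod 2) (V n), ∃ c' : V n, W' ≤ W ∧ Coset W' c' ⊆ Coset W c ∧
      finrank (ZMod 2) W ≤ finrank (ZMod 2) W' + 1 ∧
      AffOn W' c' (fun x => g₁ x * g₂ x) := by
  obtain ⟨a₁, b₁, ha₁⟩ := h₁
  obtain ⟨a₂, b₂, ha₂⟩ := h₂
  by_cases hcst : ∀ w ∈ W, ∑ i, a₁ i * w i = 0
  · -- g₁ is constant on the coset
    set t : ZMod 2 := (∑ i, a₁ i * c i) + b₁ with ht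
    refine ⟨W, c, le_rfl, le_rfl, Nat.le_succ _, ⟨fun i => t * a₂ i, t * b₂, fun x hx => ?_⟩⟩
    obtain ⟨w, hw, rfl⟩ := hx
    have hg1 : g₁ (c + w) = t := by
      rw [ha₁ (c + w) ⟨w, hw, rfl⟩]
      simp [mul_add, Finset.sum_add_distrib, hcst w hw, ht]
    show g₁ (c + w) * g₂ (c + w) = _
    rw [hg1, ha₂ (c + w) ⟨w, hw, rfl⟩]
    simp [mul_add, mul_assoc, Finset.mul_sum]
  · push_neg at hcst
    obtain ⟨w₀, hw₀W, hw₀⟩ := hcst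
    have hw₀1 : lfun a₁ w₀ = 1 := zmod2_eq_one hw₀
    set φ : W →ₗ[ZMod 2] ZMod 2 := (lfun a₁).comp W.subtype with hφ
    have hsurj : Function.Surjective φ := by
      intro t
      refine ⟨t • ⟨w₀, hw₀W⟩, ?_⟩
      simp [hφ, hw₀1]
    set W' : Submodule (ZMod 2) (V n) := (LinearMap.ker φ).map W.subtype with hW'
    set t₀ : ZMod 2 := (∑ i, a₁ i * c i) + b₁ with ht₀
    set c' : V n := c + t₀ • w₀ with hc'
    have hle : W' ≤ W := Submodule.map_subtype_le _ _
    have hmemW' : ∀ w, w ∈ W' → w ∈ W ∧ lfun a₁ w = 0 := by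
      intro w hw
      obtain ⟨y, hy, rfl⟩ := hw
      exact ⟨y.2, hy⟩
    have hsub : Coset W' c' ⊆ Coset W c := by
      rintro x ⟨w, hw, rfl⟩
      exact ⟨t₀ • w₀ + w, W.add_mem (W.smul_mem _ hw₀W) (hle hw), by rw [hc']; abel⟩
    have hrk : finrank (ZMod 2) W ≤ finrank (ZMod 2) W' + 1 := by
      have h1 := LinearMap.finrank_range_add_finrank_ker φ
      have h2 : LinearMap.range φ = ⊤ := LinearMap.range_eq_top.mpr hsurj
      rw [h2, finrank_top, finrank_self] at h1
      have h3 : finrank (ZMod 2) W' = finrank (ZMod 2) (LinearMap.ker φ) :=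
        Submodule.finrank_map_subtype_eq W (LinearMap.ker φ)
      omega
    refine ⟨W', c', hle, hsub, hrk, ⟨0, 0, fun x hx => ?_⟩⟩
    obtain ⟨w, hw, rfl⟩ := hx
    have hg1 : g₁ (c' + w) = 0 := by
      rw [ha₁ (c' + w) (hsub ⟨w, hw, rfl⟩)]
      have hwl : lfun a₁ w = 0 := (hmemW' w hw).2
      have : (∑ i, a₁ i * (c' + w) i) = lfun a₁ c' + lfun a₁ w := by
        simp [lfun, mul_add, Finset.sum_add_distrib]
      rw [this, hwl]
      have : lfun a₁ c' = t₀ + lfun a₁ c := by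
        rw [hc']; simp [hw₀1]; ring
      rw [this]
      have hlc : lfun a₁ c = ∑ i, a₁ i * c i := rfl
      rw [hlc, ht₀]
      ring_nf
      rw [show (2 : ZMod 2) = 0 by decide]  -- maybe not needed
      ring
    show g₁ (c' + w) * g₂ (c' + w) = _
    rw [hg1]
    simp

end XorAndAux

namespace XorAndAux

lemma evalProg_append (n : ℕ) (x : Fin n → ZMod 2) (P : List Instr) (ins : Instr) :
    evalProg n x (P ++ [ins]) = evalProg n x P ++ [stepEval n x (evalProg n x P) ins] := by
  simp [evalProg, List.foldl_append]

lemma foldl_len (n : ℕ) (x : Fin n → ZMod 2) (P : List Instr) :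
    ∀ init : List (ZMod 2),
      (P.foldl (fun vals ins => vals ++ [stepEval n x vals ins]) init).length
        = init.length + P.length := by
  induction P with
  | nil => intro init; simp
  | cons ins P ih =>
      intro init
      rw [List.foldl_cons, ih, List.length_append]
      simp only [List.length_cons, List.length_nil]
      omega

lemma evalProg_length (n : ℕ) (x : Fin n → ZMod 2) (P : List Instr) :
    (evalProg n x P).length = P.length := by
  simpa [evalProg] using foldl_len n x P []

lemma andCount_append (P : List Instr) (ins : Instr) :
    andCount (P ++ [ins]) = andCount P + (if ins.isAnd then 1 else 0) := by
  simp [andCount, List.filter_append]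
  cases ins <;> simp [Instr.isAnd, List.filter_cons]

lemma main_invariant (n : ℕ) (P : List Instr) :
    ∃ W : Submodule (ZMod 2) (V n), ∃ c : V n,
      n ≤ finrank (ZMod 2) W + andCount P ∧
      ∀ j : ℕ, AffOn W c (fun x => (evalProg n x P).getD j 0) := by
  induction P using List.reverseRecOn with
  | nil =>
      refine ⟨⊤, 0, ?_, fun j => ?_⟩
      · have : finrank (ZMod 2) (⊤ : Submodule (ZMod 2) (V n)) = n := by
          rw [finrank_top]; simp [Module.finrank_fin_fun]
        rw [this]; omega
      · simpa [evalProg] using affOn_const (⊤ : Submodule (ZMod 2) (V n)) 0 0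
  | append_singleton P ins ih =>
      obtain ⟨W, c, hrk, haff⟩ := ih
      -- first produce (W', c') with coset inclusion, rank bound, and affineness of new wire
      have key : ∃ W' : Submodule (ZMod 2) (V n), ∃ c' : V n,
          Coset W' c' ⊆ Coset W c ∧
          n ≤ finrank (ZMod 2) W' + andCount (P ++ [ins]) ∧
          AffOn W' c' (fun x => stepEval n x (evalProg n x P) ins) := by
        cases ins with
        | var i =>
            refine ⟨W, c, le_rfl, by rw [andCount_append]; simpa [Instr.isAnd] using hrk, ?_⟩
            by_cases h : i < n
            · refine ⟨fun j => if j = ⟨i, h⟩ then 1 else 0, 0, fun x _ => ?_⟩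
              simp [stepEval, h, Finset.sum_ite_eq']
            · simpa [stepEval, h] using affOn_const W c 0
        | one =>
            refine ⟨W, c, le_rfl, by rw [andCount_append]; simpa [Instr.isAnd] using hrk, ?_⟩
            simpa [stepEval] using affOn_const W c 1
        | xor a b =>
            refine ⟨W, c, le_rfl, by rw [andCount_append]; simpa [Instr.isAnd] using hrk, ?_⟩
            simpa [stepEval] using affOn_add (haff a) (haff b)
        | and a b =>
            obtain ⟨W', c', _, hsub, hrk', haffand⟩ :=
              and_step W c _ _ (haff a) (haff b)
            refine ⟨W', c', hsub, ?_, ?_⟩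
            · rw [andCount_append]; simp [Instr.isAnd]; omega
            · simpa [stepEval] using haffand
      obtain ⟨W', c', hsub, hrk', hnew⟩ := key
      refine ⟨W', c', hrk', fun j => ?_⟩
      rcases lt_trichotomy j P.length with hj | hj | hj
      · have : (fun x => (evalProg n x (P ++ [ins])).getD j 0)
            = fun x => (evalProg n x P).getD j 0 := by
          funext x
          rw [evalProg_append, List.getD_append]
          rw [evalProg_length]; exact hj
        rw [this]
        exact affOn_mono hsub (haff j)
      · have : (fun x => (evalProg n x (P ++ [ins])).getD j 0)
            = fun x => stepEval n x (evalProg n x P) ins := by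
          funext x
          rw [evalProg_append]
          have hl : (evalProg n x P).length = j := by rw [evalProg_length, hj]
          rw [List.getD_eq_getElem?_getD, List.getElem?_append_right (by omega)]
          simp [hl]
        rw [this]
        exact hnew
      · have : (fun x => (evalProg n x (P ++ [ins])).getD j 0) = fun _ => (0 : ZMod 2) := by
          funext x
          rw [List.getD_eq_getElem?_getD, List.getElem?_eq_none, Option.getD_none]
          rw [evalProg_append, List.length_append, evalProg_length]
          simpa using hj
        rw [this]
        exact affOn_const W' c' 0

end XorAndAux

open XorAndAux

/-- A function computable by an XOR-AND circuit with n - k AND gates is affine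
on some affine subspace of dimension k. -/
theorem affine_subspace_of_few_and_gates (n k : ℕ) (hk : k ≤ n)
    (f : (Fin n → ZMod 2) → ZMod 2) (P : List Instr) (out : ℕ)
    (hP : Computes1 n P out f) (hc : andCount P = n - k) :
    ∃ (W : Submodule (ZMod 2) (Fin n → ZMod 2)) (c : Fin n → ZMod 2),
      Module.finrank (ZMod 2) W = k ∧ AffineOn n f {x | ∃ w ∈ W, x = c + w} := by
  obtain ⟨W, c, hrk, haff⟩ := main_invariant n P
  rw [hc] at hrk
  have hkW : k ≤ finrank (ZMod 2) W := by omega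
  obtain ⟨g, hg⟩ := exists_linearIndependent_of_le_finrank hkW
  have hgi : LinearIndependent (ZMod 2) (fun i => (g i : Fin n → ZMod 2)) :=
    hg.map' W.subtype (Submodule.ker_subtype W)
  set W'' : Submodule (ZMod 2) (Fin n → ZMod 2) :=
    Submodule.span (ZMod 2) (Set.range fun i => (g i : Fin n → ZMod 2)) with hW''
  have hle : W'' ≤ W := by
    rw [hW'', Submodule.span_le]
    rintro _ ⟨i, rfl⟩
    exact (g i).2
  refine ⟨W'', c, ?_, ?_⟩
  · rw [hW'', finrank_span_eq_card hgi, Fintype.card_fin]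
  · obtain ⟨a, b, ha⟩ := haff out
    refine ⟨a, b, fun x hx => ?_⟩
    rw [← hP x]
    refine ha x ?_
    obtain ⟨w, hw, rfl⟩ := hx
    exact ⟨w, hle hw, rfl⟩
end

section
/- The nonlinearity of any Boolean function f : 𝔽₂^n → 𝔽₂ is at most 2^{n-1} − 2^{n/2−1}. -/
open Finset

private def chi (t : ZMod 2) : ℤ := if t = 0 then 1 else -1

private lemma chi_add : ∀ s t : ZMod 2, chi (s + t) = chi s * chi t := by decide

private lemma chi_ite : ∀ (u v b : ZMod 2), chi (v + u) = chi b * (if u + b = v then 1 else -1) := by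
  decide

private lemma zmod2_add_eq_zero : ∀ a b : ZMod 2, a + b = 0 → a = b := by decide

-- orthogonality
private lemma sum_chi_eq_zero {n : ℕ} (z : Fin n → ZMod 2) (hz : z ≠ 0) :
    ∑ a : Fin n → ZMod 2, chi (∑ i, a i * z i) = 0 := by
  obtain ⟨i, hi⟩ : ∃ i, z i ≠ 0 := by
    by_contra h
    push_neg at h
    exact hz (funext fun i => h i)
  have hzi : z i = 1 := by
    revert hi; generalize z i = t; revert t; decide
  set δ : Fin n → ZMod 2 := Pi.single i 1 with hδ
  set g : (Fin n → ZMod 2) → ℤ := fun a => chi (∑ j, a j * z j) with hg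
  have h1 : ∑ a, g (a + δ) = ∑ a, g a :=
    Fintype.sum_equiv (Equiv.addRight δ) _ _ (fun a => rfl)
  have h2 : ∀ a, g (a + δ) = - g a := by
    intro a
    have hs : ∑ j, (a + δ) j * z j = (∑ j, a j * z j) + z i := by
      have : ∀ j, (a + δ) j * z j = a j * z j + δ j * z j := by
        intro j; simp [add_mul]
      rw [Finset.sum_congr rfl fun j _ => this j, Finset.sum_add_distrib]
      congr 1
      rw [Finset.sum_eq_single i]
      · simp [hδ]
      · intro j _ hj; simp [hδ, Pi.single_eq_of_ne hj]
      · simp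
    simp only [hg, hs, hzi, chi_add]
    have : chi 1 = -1 := rfl
    rw [this]; ring
  have h3 : ∑ a, g (a + δ) = - ∑ a, g a := by
    rw [Finset.sum_congr rfl fun a _ => h2 a, Finset.sum_neg_distrib]
  have := h1.symm.trans h3
  linarith [this]

private lemma parseval {n : ℕ} (f : (Fin n → ZMod 2) → ZMod 2) :
    ∑ a : Fin n → ZMod 2, (∑ x : Fin n → ZMod 2, chi (f x + ∑ i, a i * x i)) ^ 2
      = 2 ^ n * 2 ^ n := by
  have key : ∀ a : Fin n → ZMod 2,
      (∑ x : Fin n → ZMod 2, chi (f x + ∑ i, a i * x i)) ^ 2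
        = ∑ x : Fin n → ZMod 2, ∑ y : Fin n → ZMod 2,
            chi (f x + f y) * chi (∑ i, a i * (x i + y i)) := by
    intro a
    rw [sq, Finset.sum_mul_sum]
    refine Finset.sum_congr rfl fun x _ => Finset.sum_congr rfl fun y _ => ?_
    rw [← chi_add, ← chi_add]
    congr 1
    have : ∑ i, a i * (x i + y i) = (∑ i, a i * x i) + ∑ i, a i * y i := by
      rw [← Finset.sum_add_distrib]
      exact Finset.sum_congr rfl fun i _ => by ring
    rw [this]; ring
  calc ∑ a : Fin n → ZMod 2, (∑ x : Fin n → ZMod 2, chi (f x + ∑ i, a i * x i)) ^ 2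
      = ∑ a : Fin n → ZMod 2, ∑ x : Fin n → ZMod 2, ∑ y : Fin n → ZMod 2,
          chi (f x + f y) * chi (∑ i, a i * (x i + y i)) := by
        exact Finset.sum_congr rfl fun a _ => key a
    _ = ∑ x : Fin n → ZMod 2, ∑ y : Fin n → ZMod 2,
          chi (f x + f y) * ∑ a : Fin n → ZMod 2, chi (∑ i, a i * (x i + y i)) := by
        rw [Finset.sum_comm]
        refine Finset.sum_congr rfl fun x _ => ?_
        rw [Finset.sum_comm]
        refine Finset.sum_congr rfl fun y _ => ?_
        rw [Finset.mul_sum]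
    _ = ∑ x : Fin n → ZMod 2, ∑ y : Fin n → ZMod 2,
          (if y = x then (2:ℤ)^n else 0) := by
        refine Finset.sum_congr rfl fun x _ => Finset.sum_congr rfl fun y _ => ?_
        by_cases hxy : y = x
        · subst hxy
          have h0 : ∀ i, y i * (y i + y i) = 0 := by
            intro i; generalize y i = t; revert t; decide
          have : ∀ a : Fin n → ZMod 2, (∑ i, a i * (y i + y i)) = 0 := by
            intro a
            refine Finset.sum_eq_zero fun i _ => ?_
            generalize a i = s; generalize y i = t; revert s t; decide
          simp only [this, if_pos rfl]
          have hfy : f y + f y = 0 := by generalize f y = t; revert t; decide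
          rw [hfy]
          simp [chi, Finset.card_univ]
        · rw [if_neg hxy]
          have hz : (fun i => x i + y i) ≠ (0 : Fin n → ZMod 2) := by
            intro h
            apply hxy
            funext i
            have := congrFun h i
            exact (zmod2_add_eq_zero _ _ this).symm
          have := sum_chi_eq_zero (fun i => x i + y i) hz
          rw [this, mul_zero]
    _ = 2 ^ n * 2 ^ n := by
        simp [Finset.sum_ite_eq', Finset.card_univ]

private lemma count_eq {n : ℕ} (f : (Fin n → ZMod 2) → ZMod 2) (a : Fin n → ZMod 2) (b : ZMod 2) :
    2 * ((Finset.univ.filter fun x : Fin n → ZMod 2 => (∑ i, a i * x i) + b = f x).card : ℤ)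
      = 2 ^ n + chi b * ∑ x : Fin n → ZMod 2, chi (f x + ∑ i, a i * x i) := by
  have h1 : ∑ x : Fin n → ZMod 2, chi (f x + ∑ i, a i * x i)
      = chi b * ∑ x : Fin n → ZMod 2, (if (∑ i, a i * x i) + b = f x then (1:ℤ) else -1) := by
    rw [Finset.mul_sum]
    exact Finset.sum_congr rfl fun x _ => chi_ite _ _ b
  set c := (Finset.univ.filter fun x : Fin n → ZMod 2 => (∑ i, a i * x i) + b = f x).card with hc
  have h2 : ∑ x : Fin n → ZMod 2, (if (∑ i, a i * x i) + b = f x then (1:ℤ) else -1)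
      = (c : ℤ) - ((2^n : ℤ) - c) := by
    rw [Finset.sum_ite, Finset.sum_const, Finset.sum_const]
    have hcard : (Finset.univ.filter fun x : Fin n → ZMod 2 => ¬((∑ i, a i * x i) + b = f x)).card
        = 2^n - c := by
      have htot : c + (Finset.univ.filter fun x : Fin n → ZMod 2 => ¬((∑ i, a i * x i) + b = f x)).card = 2^n := by
        rw [hc, Finset.card_filter_add_card_filter_not, Finset.card_univ]
        simp
      clear_value c
      clear hc h1
      generalize (Finset.univ.filter fun x : Fin n → ZMod 2 => ¬((∑ i, a i * x i) + b = f x)).card = d at htot ⊢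
      omega
    rw [hcard, nsmul_eq_mul, nsmul_eq_mul]
    have hle : c ≤ 2^n := by
      calc c ≤ (Finset.univ : Finset (Fin n → ZMod 2)).card := Finset.card_filter_le _ _
        _ = 2^n := by simp [Finset.card_univ]
    push_cast [hle]
    ring
  have hb2 : chi b * chi b = 1 := by
    have : ∀ t : ZMod 2, chi t * chi t = 1 := by decide
    exact this b
  rw [h1, ← mul_assoc, hb2, one_mul, h2]
  ring

private lemma le_sup_univ {α : Type*} [Fintype α] (g : α → ℕ) (a : α) :
    g a ≤ Finset.univ.sup g :=
  Finset.le_sup (Finset.mem_univ a)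

private lemma natcard_eq {n : ℕ} (p : (Fin n → ZMod 2) → Prop) [DecidablePred p] :
    Nat.card {x | p x} = (Finset.univ.filter p).card := by
  simp [Nat.card_eq_fintype_card, Fintype.card_subtype]


/-- The nonlinearity of any Boolean function is at most 2^(n-1) - 2^(n/2-1). -/
theorem nl_le_bent_bound (n : ℕ) (f : (Fin n → ZMod 2) → ZMod 2) :
    (NL n f : ℝ) ≤ 2 ^ ((n : ℝ) - 1) - 2 ^ ((n : ℝ) / 2 - 1) := by
  unfold NL
  set M := Finset.univ.sup (fun ab : (Fin n → ZMod 2) × ZMod 2 =>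
    Nat.card {x : Fin n → ZMod 2 | (∑ i, ab.1 i * x i) + ab.2 = f x}) with hM
  have hMle : M ≤ 2 ^ n := by
    rw [hM]
    refine Finset.sup_le fun ab _ => ?_
    rw [natcard_eq]
    calc (Finset.univ.filter _).card ≤ (Finset.univ : Finset (Fin n → ZMod 2)).card :=
          Finset.card_filter_le _ _
      _ = 2 ^ n := by simp [Finset.card_univ]
  -- find a good Walsh coefficient
  obtain ⟨a, _, ha⟩ : ∃ a ∈ (Finset.univ : Finset (Fin n → ZMod 2)),
      (2:ℤ)^n ≤ (∑ x : Fin n → ZMod 2, chi (f x + ∑ i, a i * x i)) ^ 2 := by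
    apply Finset.exists_le_of_sum_le Finset.univ_nonempty
    rw [parseval f]
    rw [Finset.sum_const, nsmul_eq_mul, Finset.card_univ]
    simp
  set w := ∑ x : Fin n → ZMod 2, chi (f x + ∑ i, a i * x i) with hw
  set b : ZMod 2 := if 0 ≤ w then 0 else 1 with hb
  have hcb : chi b * w = |w| := by
    by_cases h0 : 0 ≤ w
    · rw [hb, if_pos h0, abs_of_nonneg h0]; simp [chi]
    · rw [hb, if_neg h0, abs_of_neg (lt_of_not_ge h0)]
      have : chi 1 = -1 := rfl
      rw [this]; ring
  have hcount := count_eq f a b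
  rw [← hw, hcb] at hcount
  set C := Nat.card {x : Fin n → ZMod 2 | (∑ i, a i * x i) + b = f x} with hC
  have hC' : (C : ℤ) = ((Finset.univ.filter fun x : Fin n → ZMod 2 =>
      (∑ i, a i * x i) + b = f x).card : ℤ) := by
    rw [hC, natcard_eq]
  have hCM : C ≤ M := by
    rw [hM, hC]
    simpa using le_sup_univ (fun ab : (Fin n → ZMod 2) × ZMod 2 =>
      Nat.card {x : Fin n → ZMod 2 | (∑ i, ab.1 i * x i) + ab.2 = f x}) (a, b)
  -- pass to the reals
  have hw2 : (2:ℝ)^n ≤ |(w:ℝ)|^2 := by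
    rw [sq_abs]; exact_mod_cast ha
  have hwge : Real.sqrt ((2:ℝ)^n) ≤ |(w:ℝ)| := by
    have h := Real.sqrt_le_sqrt hw2
    rwa [Real.sqrt_sq (abs_nonneg _)] at h
  have h2C : 2 * (C:ℝ) = (2:ℝ)^n + |(w:ℝ)| := by
    have h := hcount
    rw [← hC'] at h
    exact_mod_cast h
  have h2M : (2:ℝ)^n + Real.sqrt ((2:ℝ)^n) ≤ 2 * (M:ℝ) := by
    have : (C:ℝ) ≤ (M:ℝ) := Nat.cast_le.2 hCM
    linarith
  -- rewrite the RHS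
  have e1 : (2:ℝ) ^ ((n:ℝ) - 1) = (2:ℝ)^n / 2 := by
    rw [Real.rpow_sub two_pos, Real.rpow_one, Real.rpow_natCast]
  have e2 : (2:ℝ) ^ ((n:ℝ)/2 - 1) = Real.sqrt ((2:ℝ)^n) / 2 := by
    rw [Real.rpow_sub two_pos, Real.rpow_one]
    congr 1
    have h : ((n:ℝ)/2) = (n:ℝ) * (1/2) := by ring
    rw [h, Real.rpow_mul (by norm_num), Real.rpow_natCast, ← Real.sqrt_eq_rpow]
  rw [e1, e2]
  rw [Nat.cast_sub hMle]
  push_cast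
  linarith
end

section
/- A uniformly random k×k matrix over 𝔽₂ has rank at most d with probability at most 2^{k − (k−d)²}. -/
open Submodule Finset Matrix

noncomputable def lrDecode (k d : ℕ)
    (t : Σ S : {S : Finset (Fin k) // S.card ≤ d},
      (↥S.1 → Fin k → ZMod 2) × ({j : Fin k // j ∉ S.1} → ↥S.1 → ZMod 2)) :
    Matrix (Fin k) (Fin k) (ZMod 2) :=
  fun x j =>
    if h : j ∈ t.1.1 then t.2.1 ⟨j, h⟩ x
    else ∑ i : ↥t.1.1, t.2.2 ⟨j, h⟩ i * t.2.1 i x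

lemma lrDecode_surj (k d : ℕ) (M : Matrix (Fin k) (Fin k) (ZMod 2))
    (hM : M.rank ≤ d) : ∃ t, lrDecode k d t = M := by
  have hrank : Module.finrank (ZMod 2) (span (ZMod 2) (Set.range Mᵀ)) ≤ d := by
    rw [Matrix.rank_eq_finrank_span_cols] at hM; exact hM
  obtain ⟨b, hbsub, hbspan, hbli⟩ := exists_linearIndependent (ZMod 2) (Set.range Mᵀ)
  have hbfin : b.Finite := Set.toFinite b
  haveI : Fintype b := hbfin.fintype
  have hbcard : b.toFinset.card ≤ d := by
    rw [← finrank_span_set_eq_card hbli, hbspan]; exact hrank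
  -- choose indices
  have hchoose : ∀ v ∈ b, ∃ j : Fin k, Mᵀ j = v := fun v hv => hbsub hv
  choose f hf using hchoose
  set S : Finset (Fin k) := b.toFinset.attach.image (fun v => f v.1 (Set.mem_toFinset.mp v.2)) with hS
  have hScard : S.card ≤ d := le_trans (Finset.card_image_le.trans (by simp)) hbcard
  have hbS : b ⊆ Mᵀ '' ↑S := by
    intro v hv
    refine ⟨f v hv, ?_, hf v hv⟩
    simp only [hS, Finset.coe_image, Set.mem_image]
    exact ⟨⟨v, Set.mem_toFinset.mpr hv⟩, by simp, rfl⟩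
  have hspan : ∀ j : Fin k, Mᵀ j ∈ span (ZMod 2) (Set.range (fun i : ↥S => Mᵀ i.1)) := by
    intro j
    have h1 : Mᵀ j ∈ span (ZMod 2) (Set.range Mᵀ) := subset_span ⟨j, rfl⟩
    have h2 : span (ZMod 2) (Set.range Mᵀ) ≤ span (ZMod 2) (Set.range (fun i : ↥S => Mᵀ i.1)) := by
      rw [← hbspan]
      apply span_le.mpr
      refine hbS.trans ?_
      rintro v ⟨i, hi, rfl⟩
      exact subset_span ⟨⟨i, hi⟩, rfl⟩
    exact h2 h1
  have hcoef : ∀ j : {j : Fin k // j ∉ S}, ∃ c : ↥S → ZMod 2,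
      ∑ i : ↥S, c i • Mᵀ i.1 = Mᵀ j.1 := by
    intro j
    exact (mem_span_range_iff_exists_fun _).mp (hspan j.1)
  choose c hc using hcoef
  refine ⟨⟨⟨S, hScard⟩, (fun i x => M x i.1), c⟩, ?_⟩
  funext x j
  unfold lrDecode
  dsimp only
  split
  · rfl
  · rename_i h
    have := congrFun (hc ⟨j, h⟩) x
    simp only [Finset.sum_apply, Pi.smul_apply, smul_eq_mul] at this
    exact this

lemma lr_nat_count (k d : ℕ) (hd : d ≤ k) :
    Nat.card {M : Matrix (Fin k) (Fin k) (ZMod 2) // M.rank ≤ d} ≤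
      2 ^ (k * d + (k - d) * d + k) := by
  classical
  set T := Σ S : {S : Finset (Fin k) // S.card ≤ d},
      (↥S.1 → Fin k → ZMod 2) × ({j : Fin k // j ∉ S.1} → ↥S.1 → ZMod 2) with hT
  have hf : ∀ M : {M : Matrix (Fin k) (Fin k) (ZMod 2) // M.rank ≤ d},
      ∃ t : T, lrDecode k d t = M.1 := fun M => lrDecode_surj k d M.1 M.2
  choose f hfd using hf
  have hinj : Function.Injective f := by
    intro M N h
    have : lrDecode k d (f M) = lrDecode k d (f N) := by rw [h]
    rw [hfd M, hfd N] at this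
    exact Subtype.ext this
  have h1 : Nat.card {M : Matrix (Fin k) (Fin k) (ZMod 2) // M.rank ≤ d} ≤ Nat.card T :=
    Nat.card_le_card_of_injective f hinj
  refine h1.trans ?_
  rw [Nat.card_eq_fintype_card, Fintype.card_sigma]
  have hterm : ∀ S : {S : Finset (Fin k) // S.card ≤ d},
      Fintype.card ((↥S.1 → Fin k → ZMod 2) × ({j : Fin k // j ∉ S.1} → ↥S.1 → ZMod 2))
        ≤ 2 ^ (k * d + (k - d) * d) := by
    intro S
    have hcS : Fintype.card ↥S.1 = S.1.card := Fintype.card_coe _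
    have hcS' : Fintype.card {j : Fin k // j ∉ S.1} = k - S.1.card := by
      rw [Fintype.card_subtype]
      have : Finset.filter (fun j => j ∉ S.1) Finset.univ = S.1ᶜ := by
        ext j; simp
      rw [this, Finset.card_compl, Fintype.card_fin]
    have hcard2 : Fintype.card (ZMod 2) = 2 := rfl
    rw [Fintype.card_prod, Fintype.card_fun, Fintype.card_fun, Fintype.card_fun,
      Fintype.card_fun, hcS, hcS', Fintype.card_fin, hcard2, ← pow_mul, ← pow_mul, ← pow_add]
    apply Nat.pow_le_pow_right (by norm_num)
    have hs : S.1.card ≤ d := S.2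
    have h1 : S.1.card ≤ k := hs.trans hd
    -- k * s + s * (k - s) ≤ k * d + (k - d) * d
    obtain ⟨u, hu⟩ := Nat.exists_eq_add_of_le h1
    obtain ⟨v, hv⟩ := Nat.exists_eq_add_of_le hd
    have hks : k - S.1.card = u := by omega
    have hkd : k - d = v := by omega
    rw [hks, hkd]
    nlinarith [hs, hu, hv]
  calc ∑ S : {S : Finset (Fin k) // S.card ≤ d},
        Fintype.card ((↥S.1 → Fin k → ZMod 2) × ({j : Fin k // j ∉ S.1} → ↥S.1 → ZMod 2))
      ≤ ∑ _S : {S : Finset (Fin k) // S.card ≤ d}, 2 ^ (k * d + (k - d) * d) :=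
        Finset.sum_le_sum fun S _ => hterm S
    _ = Fintype.card {S : Finset (Fin k) // S.card ≤ d} * 2 ^ (k * d + (k - d) * d) := by
        rw [Finset.sum_const, Finset.card_univ, smul_eq_mul]
    _ ≤ 2 ^ k * 2 ^ (k * d + (k - d) * d) := by
        gcongr
        calc Fintype.card {S : Finset (Fin k) // S.card ≤ d}
            ≤ Fintype.card (Finset (Fin k)) := Fintype.card_subtype_le _
          _ = 2 ^ k := by simp
    _ = 2 ^ (k * d + (k - d) * d + k) := by ring

/-- The number of k x k matrices over GF(2) of rank at most d is at most
2^(k^2) * 2^(k-(k-d)^2): a uniformly random such matrix has rank at most d with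
probability at most 2^(k-(k-d)^2). -/
theorem low_rank_matrix_count (k d : ℕ) (hd : d ≤ k) :
    (Nat.card {M : Matrix (Fin k) (Fin k) (ZMod 2) // M.rank ≤ d} : ℝ) ≤
      2 ^ (k ^ 2) * (2 : ℝ) ^ ((k : ℝ) - ((k : ℝ) - (d : ℝ)) ^ 2) := by
  have h := lr_nat_count k d hd
  set n := k * d + (k - d) * d + k with hn
  have h1 : (Nat.card {M : Matrix (Fin k) (Fin k) (ZMod 2) // M.rank ≤ d} : ℝ) ≤ (2:ℝ) ^ n := by
    exact_mod_cast Nat.cast_le.mpr h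
  refine h1.trans_eq ?_
  have e1 : (2:ℝ) ^ n = (2:ℝ) ^ ((n : ℕ) : ℝ) := (Real.rpow_natCast 2 n).symm
  have e2 : (2:ℝ) ^ (k ^ 2) = (2:ℝ) ^ ((k^2 : ℕ) : ℝ) := (Real.rpow_natCast 2 (k^2)).symm
  rw [e1, e2, ← Real.rpow_add (by norm_num)]
  congr 1
  rw [hn]
  push_cast [Nat.cast_sub hd]
  ring
end

section
/- The (n,n)-function f with fᵢ(x) = ∏_{j ≠ i} xⱼ can be computed by an XOR-AND circuit with at most 3n − 6 AND gates, for n ≥ 4. -/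
-- helpers
lemma getD_map_range (W : ℕ → ZMod 2) {k L : ℕ} (h : k < L) :
    ((List.range L).map W).getD k 0 = W k := by
  simp [List.getD, List.getElem?_map, List.getElem?_range h]

lemma evalProg_eq (n : ℕ) (x : Fin n → ZMod 2) (I : ℕ → Instr) (W : ℕ → ZMod 2) (m : ℕ)
    (h : ∀ k < m, stepEval n x ((List.range k).map W) (I k) = W k) :
    evalProg n x ((List.range m).map I) = (List.range m).map W := by
  induction m with
  | zero => simp [evalProg]
  | succ m ih =>
    rw [List.range_succ, List.map_append, List.map_singleton, evalProg_append,
      ih (fun k hk => h k (by omega)), h m (by omega)]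
    simp

def xev (n : ℕ) (x : Fin n → ZMod 2) (j : ℕ) : ZMod 2 :=
  if h : j < n then x ⟨j, h⟩ else 1

def Wv (n : ℕ) (x : Fin n → ZMod 2) (k : ℕ) : ZMod 2 :=
  if k < n then xev n x k
  else if k < 2*n-2 then ∏ j ∈ Finset.range (k-n+2), xev n x j
  else if k < 3*n-4 then ∏ j ∈ Finset.Ico (3*n-4-k) n, xev n x j
  else ∏ j ∈ (Finset.range n).erase (k-(3*n-4)+1), xev n x j

def Iv (n k : ℕ) : Instr :=
  if k < n then .var k
  else if k = n then .and 0 1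
  else if k < 2*n-2 then .and (k-1) (k-n+1)
  else if k = 2*n-2 then .and (n-2) (n-1)
  else if k < 3*n-4 then .and (3*n-4-k) (k-1)
  else .and (if k = 3*n-4 then 0 else n+(k-(3*n-4))-1)
            (if k = 4*n-7 then n-1 else 3*n-6-(k-(3*n-4)))

lemma stepAnd (n : ℕ) (x : Fin n → ZMod 2) (vals : List (ZMod 2)) (a b : ℕ) :
    stepEval n x vals (.and a b) = vals.getD a 0 * vals.getD b 0 := rfl

lemma hstep (n : ℕ) (hn : 4 ≤ n) (x : Fin n → ZMod 2) (k : ℕ) (hk : k < 4*n-6) :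
    stepEval n x ((List.range k).map (Wv n x)) (Iv n k) = Wv n x k := by
  by_cases h1 : k < n
  · simp [Iv, h1, stepEval, Wv, xev]
  by_cases h2 : k = n
  · have hIv : Iv n k = .and 0 1 := by simp [Iv, h1, h2]
    rw [hIv, stepAnd, getD_map_range _ (show 0 < k by omega),
      getD_map_range _ (show 1 < k by omega)]
    rw [Wv, Wv, Wv, if_pos (show 0 < n by omega), if_pos (show 1 < n by omega),
      if_neg h1, if_pos (show k < 2*n-2 by omega), show k-n+2 = 2 by omega]
    simp [Finset.prod_range_succ]
  by_cases h3 : k < 2*n-2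
  · have hIv : Iv n k = .and (k-1) (k-n+1) := by simp [Iv, h1, h2, h3]
    rw [hIv, stepAnd, getD_map_range _ (show k-1 < k by omega),
      getD_map_range _ (show k-n+1 < k by omega)]
    rw [Wv, Wv, Wv, if_neg (show ¬(k-1 < n) by omega), if_pos (show k-1 < 2*n-2 by omega),
      if_pos (show k-n+1 < n by omega), if_neg h1, if_pos h3,
      show k-1-n+2 = k-n+1 by omega]
    rw [show k-n+2 = (k-n+1)+1 by omega, Finset.prod_range_succ (xev n x) (k-n+1)]
  by_cases h4 : k = 2*n-2
  · have hIv : Iv n k = .and (n-2) (n-1) := by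
      rw [Iv, if_neg h1, if_neg h2, if_neg h3, if_pos h4]
    rw [hIv, stepAnd, getD_map_range _ (show n-2 < k by omega),
      getD_map_range _ (show n-1 < k by omega)]
    rw [Wv, Wv, Wv, if_pos (show n-2 < n by omega), if_pos (show n-1 < n by omega),
      if_neg h1, if_neg h3, if_pos (show k < 3*n-4 by omega),
      show 3*n-4-k = n-2 by omega,
      show Finset.Ico (n-2) n = {n-2, n-1} by ext j; simp [Finset.mem_Ico]; omega,
      Finset.prod_insert (by simp; omega), Finset.prod_singleton]
  by_cases h5 : k < 3*n-4
  · have hIv : Iv n k = .and (3*n-4-k) (k-1) := by simp [Iv, h1, h2, h3, h4, h5]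
    rw [hIv, stepAnd, getD_map_range _ (show 3*n-4-k < k by omega),
      getD_map_range _ (show k-1 < k by omega)]
    rw [Wv, Wv, Wv, if_pos (show 3*n-4-k < n by omega), if_neg (show ¬(k-1 < n) by omega),
      if_neg (show ¬(k-1 < 2*n-2) by omega), if_pos (show k-1 < 3*n-4 by omega),
      if_neg h1, if_neg h3, if_pos h5, show 3*n-4-(k-1) = (3*n-4-k)+1 by omega,
      Finset.prod_eq_prod_Ico_succ_bot (show 3*n-4-k < n by omega)]
  · -- output region
    set t := k - (3*n-4) with ht
    have htle : t ≤ n - 3 := by omega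
    have hIv : Iv n k = .and (if k = 3*n-4 then 0 else n+t-1)
        (if k = 4*n-7 then n-1 else 3*n-6-t) := by
      simp [Iv, h1, h2, h3, h4, h5, ht]
    have hPa : (if k = 3*n-4 then 0 else n+t-1) < k := by split <;> omega
    have hSb : (if k = 4*n-7 then n-1 else 3*n-6-t) < k := by split <;> omega
    rw [hIv, stepAnd, getD_map_range _ hPa, getD_map_range _ hSb]
    have hP : Wv n x (if k = 3*n-4 then 0 else n+t-1)
        = ∏ j ∈ Finset.range (t+1), xev n x j := by
      split
      · next h =>
        rw [Wv, if_pos (show (0:ℕ) < n by omega)]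
        simp [show t = 0 by omega, xev, show (0:ℕ) < n by omega]
      · next h =>
        have h' : t ≥ 1 := by omega
        rw [Wv, if_neg (by omega), if_pos (show n+t-1 < 2*n-2 by omega),
          show n+t-1-n+2 = t+1 by omega]
    have hS : Wv n x (if k = 4*n-7 then n-1 else 3*n-6-t)
        = ∏ j ∈ Finset.Ico (t+2) n, xev n x j := by
      split
      · next h =>
        have h' : t = n - 3 := by omega
        rw [Wv, if_pos (show n-1 < n by omega),
          show Finset.Ico (t+2) n = {n-1} by ext j; simp [Finset.mem_Ico]; omega,
          Finset.prod_singleton]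
      · next h =>
        have h' : t ≤ n - 4 := by omega
        rw [Wv, if_neg (show ¬(3*n-6-t < n) by omega),
          if_neg (show ¬(3*n-6-t < 2*n-2) by omega),
          if_pos (show 3*n-6-t < 3*n-4 by omega),
          show 3*n-4-(3*n-6-t) = t+2 by omega]
    rw [hP, hS, Wv, if_neg h1, if_neg h3, if_neg h5,
      show (Finset.range n).erase (k-(3*n-4)+1)
          = Finset.range (t+1) ∪ Finset.Ico (t+2) n by
        ext j; simp [Finset.mem_Ico]; omega,
      Finset.prod_union (by simp [Finset.disjoint_left, Finset.mem_Ico]; omega)]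

lemma prod_erase_eq (n : ℕ) (x : Fin n → ZMod 2) (i : Fin n) :
    ∏ j ∈ (Finset.range n).erase i.val, xev n x j = ∏ j ∈ Finset.univ.erase i, x j := by
  have h1 : ∏ j ∈ (Finset.range n).erase i.val, xev n x j
      = ∏ j ∈ Finset.range n, (if j = i.val then 1 else xev n x j) := by
    rw [← Finset.prod_erase (Finset.range n)
      (f := fun j => if j = i.val then 1 else xev n x j) (if_pos rfl)]
    exact Finset.prod_congr rfl fun j hj => (if_neg (Finset.ne_of_mem_erase hj)).symm
  have h2 : ∏ j ∈ Finset.univ.erase i, x j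
      = ∏ j : Fin n, (if j = i then 1 else x j) := by
    rw [← Finset.prod_erase Finset.univ
      (f := fun j => if j = i then 1 else x j) (if_pos rfl)]
    exact Finset.prod_congr rfl fun j hj => (if_neg (Finset.ne_of_mem_erase hj)).symm
  rw [h1, h2, ← Fin.prod_univ_eq_prod_range (fun j => if j = i.val then 1 else xev n x j) n]
  apply Finset.prod_congr rfl
  intro j _
  by_cases h : j = i
  · simp [h]
  · rw [if_neg h, if_neg (by simpa [Fin.ext_iff] using h), xev, dif_pos j.isLt]

/-- The (n,n)-function f_i(x) = prod_(j ≠ i) x_j is computable with at most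
3n - 6 AND gates, for n ≥ 4. -/
theorem explicit_upper_bound (n : ℕ) (hn : 4 ≤ n) :
    ∃ (P : List Instr) (out : Fin n → ℕ),
      Computes n n P out (fun x i => ∏ j ∈ Finset.univ.erase i, x j) ∧
        andCount P ≤ 3 * n - 6 := by
  refine ⟨(List.range (4*n-6)).map (Iv n),
    fun i => if i.val = n-1 then 2*n-3 else 3*n-5+i.val, ?_, ?_⟩
  · intro x i
    rw [evalProg_eq n x (Iv n) (Wv n x) (4*n-6) (fun k hk => hstep n hn x k hk)]
    have hlt : (if i.val = n-1 then 2*n-3 else 3*n-5+i.val) < 4*n-6 := by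
      have := i.isLt; split <;> omega
    rw [getD_map_range _ hlt]
    show _ = ∏ j ∈ Finset.univ.erase i, x j
    rw [← prod_erase_eq n x i]
    split
    · next h =>
      rw [Wv, if_neg (show ¬(2*n-3 < n) by omega), if_pos (show 2*n-3 < 2*n-2 by omega),
        show 2*n-3-n+2 = n-1 by omega]
      apply Finset.prod_congr _ (fun _ _ => rfl)
      ext j; simp [h]; omega
    · next h =>
      have hi := i.isLt
      by_cases h0 : i.val = 0
      · rw [h0, Wv, if_neg (show ¬(3*n-5+0 < n) by omega),
          if_neg (show ¬(3*n-5+0 < 2*n-2) by omega),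
          if_pos (show 3*n-5+0 < 3*n-4 by omega),
          show 3*n-4-(3*n-5+0) = 1 by omega]
        apply Finset.prod_congr _ (fun _ _ => rfl)
        ext j; simp [h0, Finset.mem_Ico]; omega
      · rw [Wv, if_neg (show ¬(3*n-5+i.val < n) by omega),
          if_neg (show ¬(3*n-5+i.val < 2*n-2) by omega),
          if_neg (show ¬(3*n-5+i.val < 3*n-4) by omega),
          show 3*n-5+i.val-(3*n-4)+1 = i.val by omega]
  · rw [andCount, show 4*n-6 = n + (3*n-6) by omega, List.range_add, List.map_append,
      List.filter_append, List.length_append]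
    have hA : (List.map (Iv n) (List.range n)).filter Instr.isAnd = [] := by
      rw [List.filter_eq_nil_iff]
      intro a ha
      simp only [List.mem_map, List.mem_range] at ha
      obtain ⟨k, hk, rfl⟩ := ha
      simp [Iv, hk, Instr.isAnd]
    rw [hA]
    simpa [Function.comp_def] using List.length_filter_le Instr.isAnd ((List.range (3*n-6)).map (fun j => Iv n (n + j)))
end
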